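/- Let d ≥ 1, n = m − d, and let i be an index with d − 1 ≤ i ≤ n. For every t with τ_i ≤ t < τ_{i+1}, the B-spline curve z(t) = Σ_{j=0}^{n} B_{j,d}(t)·p_j lies in the convex hull of the d consecutive control points p_{i−d+1}, …, p_i (convex hull property). -/

import Mathlib

/-- Cox–de Boor B-spline basis function `B_{i,d}(t)` of order `d` for the knot
vector `τ`.  In Lean, division by zero yields zero, which matches the standard
convention that any term of the recursion whose denominator vanishes is taken
to be zero. -/
noncomputable def bspline (τ : ℕ → ℝ) : ℕ → ℕ → ℝ → ℝ
  | 0, _, _ => 0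
  | 1, i, t => if τ i ≤ t ∧ t < τ (i + 1) then 1 else 0
  | d + 2, i, t =>
      (t - τ i) / (τ (i + d + 1) - τ i) * bspline τ (d + 1) i t
      + (τ (i + d + 2) - t) / (τ (i + d + 2) - τ (i + 1)) * bspline τ (d + 1) (i + 1) t

lemma bspline_congr (τ σ : ℕ → ℝ) (d : ℕ) (t : ℝ) :
    ∀ j : ℕ, (∀ k, k ≤ j + d → τ k = σ k) → bspline τ d j t = bspline σ d j t := by
  induction d with
  | zero => intro j h; simp [bspline]
  | succ d ih =>
    cases d with
    | zero =>
      intro j h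
      show bspline τ 1 j t = bspline σ 1 j t
      simp [bspline, h j (by omega), h (j+1) (by omega)]
    | succ e =>
      intro j h
      show bspline τ (e+2) j t = bspline σ (e+2) j t
      simp only [bspline]
      rw [ih j (fun k hk => h k (by omega)), ih (j+1) (fun k hk => h k (by omega)),
        h j (by omega), h (j+e+1) (by omega), h (j+e+2) (by omega), h (j+1) (by omega)]

lemma bspline_eq_zero_of_lt (σ : ℕ → ℝ) (hσ : ∀ k, σ k ≤ σ (k+1)) (d : ℕ) (t : ℝ) :
    ∀ j : ℕ, t < σ j → bspline σ d j t = 0 := by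
  induction d with
  | zero => intro j h; simp [bspline]
  | succ d ih =>
    cases d with
    | zero =>
      intro j h
      show bspline σ 1 j t = 0
      simp only [bspline, ite_eq_right_iff]
      rintro ⟨h1, _⟩
      exact absurd h1 (not_le.2 h)
    | succ e =>
      intro j h
      show bspline σ (e+2) j t = 0
      simp only [bspline, ih j h, ih (j+1) (h.trans_le (hσ j)), mul_zero, add_zero]

lemma bspline_eq_zero_of_le (σ : ℕ → ℝ) (hσ : ∀ k, σ k ≤ σ (k+1)) (d : ℕ) (t : ℝ) :
    ∀ j : ℕ, σ (j + d) ≤ t → bspline σ d j t = 0 := by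
  induction d with
  | zero => intro j h; simp [bspline]
  | succ d ih =>
    cases d with
    | zero =>
      intro j h
      show bspline σ 1 j t = 0
      simp only [bspline, ite_eq_right_iff]
      rintro ⟨_, h2⟩
      exact absurd h2 (not_lt.2 h)
    | succ e =>
      intro j h
      show bspline σ (e+2) j t = 0
      have h1 : σ (j + (e+1)) ≤ t := le_trans (hσ (j + e + 1)) h
      have h2 : σ (j + 1 + (e+1)) ≤ t := by
        have : j + 1 + (e+1) = j + (e+2) := by omega
        rw [this]; exact h
      simp only [bspline, ih j h1, ih (j+1) h2, mul_zero, add_zero]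

lemma bspline_nonneg (σ : ℕ → ℝ) (hσ : ∀ k, σ k ≤ σ (k+1)) (d : ℕ) (t : ℝ) :
    ∀ j : ℕ, 0 ≤ bspline σ d j t := by
  have mono : Monotone σ := monotone_nat_of_le_succ hσ
  induction d with
  | zero => intro j; simp [bspline]
  | succ d ih =>
    cases d with
    | zero =>
      intro j
      show 0 ≤ bspline σ 1 j t
      simp only [bspline]
      split <;> norm_num
    | succ e =>
      intro j
      show 0 ≤ bspline σ (e+2) j t
      simp only [bspline]
      apply add_nonneg
      · rcases lt_or_ge t (σ j) with h | h
        · rw [bspline_eq_zero_of_lt σ hσ _ _ _ h, mul_zero]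
        · exact mul_nonneg (div_nonneg (by linarith)
            (sub_nonneg.2 (mono (by omega : j ≤ j + e + 1)))) (ih j)
      · rcases le_or_gt t (σ (j + e + 2)) with h | h
        · exact mul_nonneg (div_nonneg (by linarith)
            (sub_nonneg.2 (mono (by omega : j + 1 ≤ j + e + 2)))) (ih (j+1))
        · have h2 : σ (j + 1 + (e+1)) ≤ t := by
            have : j + 1 + (e+1) = j + e + 2 := by omega
            rw [this]; exact h.le
          rw [bspline_eq_zero_of_le σ hσ _ _ _ h2, mul_zero]

lemma sum_Icc_eq_sum_range' (f : ℕ → ℝ) (a e : ℕ) :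
    ∑ j ∈ Finset.Icc a (a + e), f j = ∑ k ∈ Finset.range (e + 1), f (a + k) := by
  induction e with
  | zero => simp
  | succ e ih =>
    rw [Finset.sum_range_succ, ← ih, show a + (e + 1) = (a + e) + 1 from rfl,
      Finset.sum_Icc_succ_top (by omega)]

lemma bspline_partition (σ : ℕ → ℝ) (hσ : ∀ k, σ k < σ (k+1)) (t : ℝ) (e : ℕ) :
    ∀ a : ℕ, σ (a + e) ≤ t → t < σ (a + e + 1) →
      ∑ k ∈ Finset.range (e + 1), bspline σ (e + 1) (a + k) t = 1 := by
  have smono : StrictMono σ := strictMono_nat_of_lt_succ hσ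
  have hσle : ∀ k, σ k ≤ σ (k+1) := fun k => (hσ k).le
  induction e with
  | zero =>
    intro a h1 h2
    rw [Finset.sum_range_one]
    simp only [Nat.add_zero] at *
    show (if σ a ≤ t ∧ t < σ (a + 1) then (1:ℝ) else 0) = 1
    rw [if_pos ⟨h1, h2⟩]
  | succ e ih =>
    intro a h1 h2
    set c : ℕ → ℝ := fun k =>
      (t - σ (a + k)) / (σ (a + k + e + 1) - σ (a + k)) * bspline σ (e + 1) (a + k) t with hc
    have key : ∀ k, bspline σ (e + 2) (a + k) t
        = (c k - c (k + 1)) + bspline σ (e + 1) (a + k + 1) t := by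
      intro k
      show (t - σ (a+k)) / (σ (a+k + e + 1) - σ (a+k)) * bspline σ (e + 1) (a+k) t
        + (σ (a+k + e + 2) - t) / (σ (a+k + e + 2) - σ (a+k + 1)) * bspline σ (e + 1) (a+k + 1) t
        = _
      have hidx : a + (k + 1) + e + 1 = a + k + e + 2 := by omega
      have hidx2 : a + (k + 1) = a + k + 1 := by omega
      have hidx3 : a + k + 1 + e + 1 = a + k + e + 2 := by omega
      simp only [hc, hidx, hidx2, hidx3]
      have hD : σ (a + k + e + 2) - σ (a + k + 1) ≠ 0 := by
        have := smono (show a + k + 1 < a + k + e + 2 by omega)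
        linarith
      have hone : (σ (a + k + e + 2) - t) / (σ (a + k + e + 2) - σ (a + k + 1))
          + (t - σ (a + k + 1)) / (σ (a + k + e + 2) - σ (a + k + 1)) = 1 := by
        rw [← add_div,
          show σ (a + k + e + 2) - t + (t - σ (a + k + 1))
            = σ (a + k + e + 2) - σ (a + k + 1) by ring, div_self hD]
      linear_combination bspline σ (e + 1) (a + k + 1) t * hone
    calc ∑ k ∈ Finset.range (e + 2), bspline σ (e + 2) (a + k) t
        = ∑ k ∈ Finset.range (e + 2), ((c k - c (k + 1)) + bspline σ (e + 1) (a + k + 1) t) := by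
          exact Finset.sum_congr rfl (fun k _ => key k)
      _ = (c 0 - c (e + 2)) + ∑ k ∈ Finset.range (e + 2), bspline σ (e + 1) (a + k + 1) t := by
          rw [Finset.sum_add_distrib, Finset.sum_range_sub' c]
      _ = 1 := by
          have hc0 : c 0 = 0 := by
            have : σ (a + 0 + (e + 1)) ≤ t := by
              have : a + 0 + (e + 1) = a + (e + 1) := by omega
              rw [this]; exact h1
            simp only [hc, bspline_eq_zero_of_le σ hσle _ _ _ this, mul_zero]
          have hce : c (e + 2) = 0 := by
            have : t < σ (a + (e + 2)) := by
              have h' : a + (e + 1) + 1 = a + (e + 2) := by omega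
              rw [← h']; exact h2
            simp only [hc, bspline_eq_zero_of_lt σ hσle _ _ _ this, mul_zero]
          have hlast : bspline σ (e + 1) (a + (e + 1) + 1) t = 0 := by
            apply bspline_eq_zero_of_lt σ hσle
            calc t < σ (a + (e+1) + 1) := h2
              _ ≤ σ (a + (e + 1) + 1) := le_refl _
          have hIH : ∑ k ∈ Finset.range (e + 1), bspline σ (e + 1) (a + 1 + k) t = 1 := by
            apply ih (a + 1)
            · have : a + 1 + e = a + (e + 1) := by omega
              rw [this]; exact h1
            · have : a + 1 + e + 1 = a + (e + 1) + 1 := by omega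
              rw [this]; exact h2
          rw [Finset.sum_range_succ, hc0, hce]
          have hre : ∀ k, a + k + 1 = a + 1 + k := fun k => by omega
          simp only [hre] at *
          rw [hIH, hlast]
          ring

theorem bspline_curve_convex_hull (q m d i : ℕ) (τ : ℕ → ℝ)
    (hτ : ∀ j, j < m → τ j < τ (j + 1))
    (hd : 1 ≤ d) (hdm : d ≤ m) (hi1 : d - 1 ≤ i) (hi2 : i ≤ m - d)
    (p : ℕ → EuclideanSpace ℝ (Fin q))
    (t : ℝ) (ht1 : τ i ≤ t) (ht2 : t < τ (i + 1)) :
    (∑ j ∈ Finset.range (m - d + 1), bspline τ d j t • p j) ∈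
      convexHull ℝ (p '' Set.Icc (i - (d - 1)) i) := by
  obtain ⟨e, rfl⟩ : ∃ e, d = e + 1 := ⟨d - 1, by omega⟩
  simp only [Nat.add_sub_cancel] at hi1 ⊢
  -- extend τ to a globally strictly increasing sequence σ
  set σ : ℕ → ℝ := fun k => if k ≤ m then τ k else τ m + ((k - m : ℕ) : ℝ) with hσdef
  have hagree : ∀ k, k ≤ m → τ k = σ k := by
    intro k hk; simp [hσdef, hk]
  have hσ : ∀ k, σ k < σ (k + 1) := by
    intro k
    simp only [hσdef]
    split_ifs with h1 h2 h2
    · exact hτ k (by omega)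
    · have hk : k = m := by omega
      rw [hk, show m + 1 - m = 1 by omega]
      norm_num
    · omega
    · have h3 : ((k - m : ℕ) : ℝ) < ((k + 1 - m : ℕ) : ℝ) := Nat.cast_lt.2 (by omega)
      linarith
  have hσle : ∀ k, σ k ≤ σ (k + 1) := fun k => (hσ k).le
  have smono : StrictMono σ := strictMono_nat_of_lt_succ hσ
  have mono : Monotone σ := smono.monotone
  set a := i - e with ha
  have hae : a + e = i := by omega
  have him : i + e + 1 ≤ m := by omega
  -- switch from τ to σ in the sum
  have hsum1 : ∑ j ∈ Finset.range (m - (e+1) + 1), bspline τ (e+1) j t • p j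
      = ∑ j ∈ Finset.range (m - (e+1) + 1), bspline σ (e+1) j t • p j := by
    apply Finset.sum_congr rfl
    intro j hj
    rw [Finset.mem_range] at hj
    rw [bspline_congr τ σ (e+1) t j (fun k hk => hagree k (by omega))]
  rw [hsum1]
  -- restrict to Icc a i
  have hsub : Finset.Icc a i ⊆ Finset.range (m - (e+1) + 1) := by
    intro j hj
    rw [Finset.mem_Icc] at hj
    rw [Finset.mem_range]
    omega
  have hσi : σ i = τ i := (hagree i (by omega)).symm
  have hσi1 : σ (i + 1) = τ (i + 1) := (hagree (i+1) (by omega)).symm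
  have hti : σ i ≤ t := by rw [hσi]; exact ht1
  have hti1 : t < σ (i + 1) := by rw [hσi1]; exact ht2
  have hsum2 : ∑ j ∈ Finset.range (m - (e+1) + 1), bspline σ (e+1) j t • p j
      = ∑ j ∈ Finset.Icc a i, bspline σ (e+1) j t • p j := by
    symm
    apply Finset.sum_subset hsub
    intro j hj hj'
    rw [Finset.mem_range] at hj
    rw [Finset.mem_Icc] at hj'
    rcases lt_or_ge j a with h | h
    · have : σ (j + (e+1)) ≤ t := le_trans (mono (by omega : j + (e+1) ≤ i)) hti
      rw [bspline_eq_zero_of_le σ hσle _ _ _ this, zero_smul]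
    · have hji : i < j := by omega
      have : t < σ j := lt_of_lt_of_le hti1 (mono (by omega : i + 1 ≤ j))
      rw [bspline_eq_zero_of_lt σ hσle _ _ _ this, zero_smul]
  rw [hsum2]
  -- partition of unity on Icc a i
  have hpart : ∑ j ∈ Finset.Icc a i, bspline σ (e+1) j t = 1 := by
    have hp := bspline_partition σ hσ t e a (by rw [hae]; exact hti) (by rw [hae]; exact hti1)
    rw [show Finset.Icc a i = Finset.Icc a (a + e) by rw [hae],
      sum_Icc_eq_sum_range']
    exact hp
  -- convex hull membership
  rw [← Finset.centerMass_eq_of_sum_1 _ p hpart]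
  apply Finset.centerMass_mem_convexHull
  · intro j _; exact bspline_nonneg σ hσle (e+1) t j
  · rw [hpart]; norm_num
  · intro j hj
    rw [Finset.mem_Icc] at hj
    exact ⟨j, ⟨hj.1, hj.2⟩, rfl⟩
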